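/- As H ↑ 1, the quantity Γ_3^3 = (ρ_2 - ρ_1^2)/(1-ρ_1^2) with ρ_1 = 2^{2H-1}-1 and ρ_2 = (1/2)(3^{2H} - 2^{2H+1} + 1) converges to (8 log 16 - 9 log 9)/(8 log 4). -/

import Mathlib

open Real Filter Set

theorem gamma33_limit :
    Filter.Tendsto (fun H : ℝ =>
        ((1/2) * ((3:ℝ) ^ (2*H) - (2:ℝ) ^ (2*H+1) + 1) - ((2:ℝ) ^ (2*H-1) - 1)^2) /
          (1 - ((2:ℝ) ^ (2*H-1) - 1)^2))
      (nhdsWithin 1 (Set.Iio (1:ℝ)))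
      (nhds ((8 * Real.log 16 - 9 * Real.log 9) / (8 * Real.log 4))) := by
  set f : ℝ → ℝ := fun H => (1/2) * ((3:ℝ) ^ (2*H) - (2:ℝ) ^ (2*H+1) + 1) - ((2:ℝ) ^ (2*H-1) - 1)^2 with hf
  set g : ℝ → ℝ := fun H => 1 - ((2:ℝ) ^ (2*H-1) - 1)^2 with hg
  set f' : ℝ → ℝ := fun x => (1/2) * ((3:ℝ)^(2*x) * Real.log 3 * 2 - (2:ℝ)^(2*x+1) * Real.log 2 * 2)
      - 2 * ((2:ℝ)^(2*x-1) - 1) * ((2:ℝ)^(2*x-1) * Real.log 2 * 2) with hf'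
  set g' : ℝ → ℝ := fun x => -(2 * ((2:ℝ)^(2*x-1) - 1) * ((2:ℝ)^(2*x-1) * Real.log 2 * 2)) with hg'
  have h3 : ∀ x : ℝ, HasDerivAt (fun H : ℝ => (3:ℝ)^(2*H)) ((3:ℝ)^(2*x) * Real.log 3 * 2) x := by
    intro x
    have inner : HasDerivAt (fun H : ℝ => 2*H) 2 x := by
      simpa using (hasDerivAt_id x).const_mul 2
    exact (Real.hasStrictDerivAt_const_rpow (by norm_num) (2*x)).hasDerivAt.comp x inner
  have h21 : ∀ x : ℝ, HasDerivAt (fun H : ℝ => (2:ℝ)^(2*H+1)) ((2:ℝ)^(2*x+1) * Real.log 2 * 2) x := by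
    intro x
    have inner : HasDerivAt (fun H : ℝ => 2*H+1) 2 x := by
      simpa using ((hasDerivAt_id x).const_mul 2).add_const 1
    exact (Real.hasStrictDerivAt_const_rpow (by norm_num) (2*x+1)).hasDerivAt.comp x inner
  have h2m : ∀ x : ℝ, HasDerivAt (fun H : ℝ => (2:ℝ)^(2*H-1)) ((2:ℝ)^(2*x-1) * Real.log 2 * 2) x := by
    intro x
    have inner : HasDerivAt (fun H : ℝ => 2*H-1) 2 x := by
      simpa using ((hasDerivAt_id x).const_mul 2).sub_const 1
    exact (Real.hasStrictDerivAt_const_rpow (by norm_num) (2*x-1)).hasDerivAt.comp x inner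
  have hρsq : ∀ x : ℝ, HasDerivAt (fun H : ℝ => ((2:ℝ)^(2*H-1) - 1)^2)
      (2 * ((2:ℝ)^(2*x-1) - 1) * ((2:ℝ)^(2*x-1) * Real.log 2 * 2)) x := by
    intro x
    have := ((h2m x).sub_const 1).fun_pow 2
    simpa [mul_comm, mul_assoc, mul_left_comm] using this
  have hfd : ∀ x : ℝ, HasDerivAt f (f' x) x := by
    intro x
    exact ((((h3 x).sub (h21 x)).add_const 1).const_mul (1/2)).sub (hρsq x)
  have hgd : ∀ x : ℝ, HasDerivAt g (g' x) x := fun x => (hρsq x).const_sub 1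
  have hlog2 : (0:ℝ) < Real.log 2 := Real.log_pos (by norm_num)
  have e3 : (3:ℝ)^(2*(1:ℝ)) = 9 := by
    rw [show 2*(1:ℝ) = ((2:ℕ):ℝ) by norm_num, Real.rpow_natCast]; norm_num
  have e21 : (2:ℝ)^(2*(1:ℝ)+1) = 8 := by
    rw [show 2*(1:ℝ)+1 = ((3:ℕ):ℝ) by norm_num, Real.rpow_natCast]; norm_num
  have e2m : (2:ℝ)^(2*(1:ℝ)-1) = 2 := by
    rw [show 2*(1:ℝ)-1 = ((1:ℕ):ℝ) by norm_num, Real.rpow_natCast]; norm_num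
  have hf1 : f 1 = 0 := by simp only [hf, e3, e21, e2m]; norm_num
  have hg1 : g 1 = 0 := by simp only [hg, e2m]; norm_num
  have hg'1 : g' 1 = -(8 * Real.log 2) := by simp only [hg', e2m]; ring
  have hf'1 : f' 1 = 9 * Real.log 3 - 16 * Real.log 2 := by simp only [hf', e3, e21, e2m]; ring
  have hg'1ne : g' 1 ≠ 0 := by rw [hg'1]; intro h; nlinarith
  have hIoo : Set.Ioo (1/2 : ℝ) 1 ∈ nhdsWithin 1 (Set.Iio (1:ℝ)) :=
    Ioo_mem_nhdsLT_of_mem ⟨by norm_num, le_rfl⟩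
  have hg'ne : ∀ᶠ x in nhdsWithin 1 (Set.Iio (1:ℝ)), g' x ≠ 0 := by
    filter_upwards [hIoo] with x hx
    have hxx : (0:ℝ) < 2*x - 1 := by linarith [hx.1]
    have h1 : (1:ℝ) < (2:ℝ)^(2*x-1) :=
      (Real.one_lt_rpow_iff_of_pos (by norm_num)).mpr (Or.inl ⟨by norm_num, hxx⟩)
    have hpos : 0 < 2 * ((2:ℝ)^(2*x-1) - 1) * ((2:ℝ)^(2*x-1) * Real.log 2 * 2) :=
      mul_pos (mul_pos two_pos (sub_pos.mpr h1))
        (mul_pos (mul_pos (by linarith : (0:ℝ) < (2:ℝ)^(2*x-1)) hlog2) two_pos)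
    simp only [hg']
    exact neg_ne_zero.mpr (ne_of_gt hpos)
  have hfc : Filter.Tendsto f (nhdsWithin 1 (Set.Iio (1:ℝ))) (nhds 0) := by
    have := (hfd 1).continuousAt.tendsto
    rw [hf1] at this
    exact this.mono_left nhdsWithin_le_nhds
  have hgc : Filter.Tendsto g (nhdsWithin 1 (Set.Iio (1:ℝ))) (nhds 0) := by
    have := (hgd 1).continuousAt.tendsto
    rw [hg1] at this
    exact this.mono_left nhdsWithin_le_nhds
  have c3 := (h3 1).continuousAt
  have c21 := (h21 1).continuousAt
  have c2m := (h2m 1).continuousAt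
  have cf' : ContinuousAt f' 1 :=
    (continuousAt_const.mul (((c3.mul continuousAt_const).mul continuousAt_const).sub
      ((c21.mul continuousAt_const).mul continuousAt_const))).sub
      ((continuousAt_const.mul (c2m.sub continuousAt_const)).mul
        ((c2m.mul continuousAt_const).mul continuousAt_const))
  have cg' : ContinuousAt g' 1 :=
    ((continuousAt_const.mul (c2m.sub continuousAt_const)).mul
      ((c2m.mul continuousAt_const).mul continuousAt_const)).neg
  have hval : f' 1 / g' 1 = (8 * Real.log 16 - 9 * Real.log 9) / (8 * Real.log 4) := by
    rw [hf'1, hg'1, show (16:ℝ) = 2^(4:ℕ) by norm_num, show (9:ℝ) = 3^(2:ℕ) by norm_num,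
      show (4:ℝ) = 2^(2:ℕ) by norm_num, Real.log_pow, Real.log_pow, Real.log_pow]
    field_simp
    ring
  have hdiv : Filter.Tendsto (fun x => f' x / g' x) (nhdsWithin 1 (Set.Iio (1:ℝ)))
      (nhds ((8 * Real.log 16 - 9 * Real.log 9) / (8 * Real.log 4))) := by
    have h : Filter.Tendsto (f'/g') (nhdsWithin 1 (Set.Iio (1:ℝ))) (nhds ((f'/g') 1)) :=
      (cf'.div cg' hg'1ne).tendsto.mono_left nhdsWithin_le_nhds
    rw [show (f'/g') 1 = f' 1 / g' 1 from rfl, hval] at h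
    exact h
  exact HasDerivAt.lhopital_zero_nhdsLT (Filter.Eventually.of_forall hfd)
    (Filter.Eventually.of_forall hgd) hg'ne hfc hgc hdiv
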